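/- For every integer n ≥ 2, the random vector (Z11^n/n, Z12^n/n, Z22^n/n) has the same joint distribution as the random vector (B_n, A_n, C_n); consequently, the empirical correlation θ_n = Z12^n/√(Z11^n·Z22^n) has the same distribution as A_n/√(B_n·C_n). -/

import Mathlib

open MeasureTheory ProbabilityTheory Finset

noncomputable section


/-- A standard Brownian motion (Wiener process) on a probability space: it starts at `0`,
has almost surely continuous paths, Gaussian increments `W_t − W_s ~ N(0, t−s)`,
and independent increments over any increasing sequence of times. -/
structure IsBrownian {Ω : Type*} [MeasurableSpace Ω] (μ : Measure Ω)
    (W : Ω → ℝ → ℝ) : Prop where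
  meas : ∀ t : ℝ, Measurable fun ω => W ω t
  zero : ∀ᵐ ω ∂μ, W ω 0 = 0
  cont : ∀ᵐ ω ∂μ, Continuous (W ω)
  gauss_incr : ∀ s t : ℝ, 0 ≤ s → s ≤ t →
    Measure.map (fun ω => W ω t - W ω s) μ = gaussianReal 0 (Real.toNNReal (t - s))
  indep_incr : ∀ (k : ℕ) (t : ℕ → ℝ), Monotone t → (∀ i, 0 ≤ t i) →
    iIndepFun
      (fun i : Fin k => fun ω => W ω (t (i.1 + 1)) - W ω (t i.1)) μ

/-- The kernel `M(s,t) = min(s,t) − s·t`. -/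
def Mker (s t : ℝ) : ℝ := min s t - s * t

/-- The discrete bilinear form
`Σ_{j,k=1}^n M((j−1)/n, (k−1)/n) (W(j/n) − W((j−1)/n)) (V(k/n) − V((k−1)/n))`. -/
def quadForm {Ω : Type*} (W V : Ω → ℝ → ℝ) (n : ℕ) (ω : Ω) : ℝ :=
  ∑ j ∈ Finset.Icc 1 n, ∑ k ∈ Finset.Icc 1 n,
    Mker (((j : ℝ) - 1) / n) (((k : ℝ) - 1) / n)
      * (W ω ((j : ℝ) / n) - W ω (((j : ℝ) - 1) / n))
      * (V ω ((k : ℝ) / n) - V ω (((k : ℝ) - 1) / n))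

/-- The continuous covariance-type functional
`∫₀¹ W(t) V(t) dt − (∫₀¹ W(t) dt)(∫₀¹ V(t) dt)`. -/
def covLim {Ω : Type*} (W V : Ω → ℝ → ℝ) (ω : Ω) : ℝ :=
  (∫ t in (0 : ℝ)..1, W ω t * V ω t)
    - (∫ t in (0 : ℝ)..1, W ω t) * (∫ t in (0 : ℝ)..1, V ω t)

/-- Partial sum `x_1 + ⋯ + x_i`. -/
def psum (x : ℕ → ℝ) (i : ℕ) : ℝ := ∑ j ∈ Finset.Icc 1 i, x j

/-- The empirical covariance of the partial-sum sequences of `x` and `y` built from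
their first `n` terms: `(1/n) Σ S_i T_i − (1/n²) (Σ S_i)(Σ T_i)`. -/
def Zbil (n : ℕ) (x y : ℕ → ℝ) : ℝ :=
  (1 / (n : ℝ)) * ∑ i ∈ Finset.Icc 1 n, psum x i * psum y i
    - (1 / (n : ℝ) ^ 2) * (∑ i ∈ Finset.Icc 1 n, psum x i) *
        (∑ i ∈ Finset.Icc 1 n, psum y i)

/-- The empirical correlation `θ_n` of the two random walks. -/
def thetaN {Ω : Type*} (X Y : ℕ → Ω → ℝ) (n : ℕ) (ω : Ω) : ℝ :=
  Zbil n (fun i => X i ω) (fun i => Y i ω) /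
    Real.sqrt (Zbil n (fun i => X i ω) (fun i => X i ω) *
      Zbil n (fun i => Y i ω) (fun i => Y i ω))


/-! ### Auxiliary lemmas -/

/-- The joint law of an injectively-indexed finite subfamily of an independent family of
real random variables is the product of the marginal laws. -/
lemma aux_map_eq_pi {Ω ι : Type*} [MeasurableSpace Ω] {μ : Measure Ω}
    [IsProbabilityMeasure μ] {n : ℕ}
    (f : ι → Ω → ℝ) (hmeas : ∀ i, Measurable (f i))
    (h : iIndepFun f μ)
    (g : Fin n → ι) (hg : Function.Injective g) :
    Measure.map (fun ω (i : Fin n) => f (g i) ω) μ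
      = Measure.pi (fun i => Measure.map (f (g i)) μ) := by
  classical
  haveI : ∀ i : Fin n, IsProbabilityMeasure (Measure.map (f (g i)) μ) :=
    fun i => Measure.isProbabilityMeasure_map (hmeas (g i)).aemeasurable
  refine (Measure.pi_eq fun s hs => ?_).symm
  rw [Measure.map_apply (measurable_pi_lambda _ fun i => hmeas (g i))
    (MeasurableSet.univ_pi hs)]
  have hpre : (fun ω (i : Fin n) => f (g i) ω) ⁻¹' (Set.pi Set.univ s)
      = ⋂ i : Fin n, f (g i) ⁻¹' s i := by
    ext ω; simp [Set.mem_pi]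
  rw [hpre]
  set s' : ι → Set ℝ := fun j => if hj : ∃ i, g i = j then s hj.choose else Set.univ with hs'
  have hkey : ∀ i : Fin n, s' (g i) = s i := by
    intro i
    have hj : ∃ i', g i' = g i := ⟨i, rfl⟩
    have : hj.choose = i := hg hj.choose_spec
    simp [hs', dif_pos hj, this]
  have hInter : (⋂ i : Fin n, f (g i) ⁻¹' s i)
      = ⋂ j ∈ Finset.image g Finset.univ, f j ⁻¹' s' j := by
    ext ω
    simp only [Set.mem_iInter, Finset.mem_image, Finset.mem_univ, true_and]
    constructor
    · rintro hω j ⟨i, rfl⟩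
      rw [hkey i]; exact hω i
    · intro hω i
      have := hω (g i) ⟨i, rfl⟩
      rwa [hkey i] at this
  rw [hInter, h.meas_biInter (fun j _ => ?_)]
  · rw [Finset.prod_image (fun i _ i' _ hii' => hg hii')]
    exact Finset.prod_congr rfl fun i _ => by
      rw [hkey i, Measure.map_apply (hmeas (g i)) (hs i)]
  · refine ⟨s' j, ?_, rfl⟩
    by_cases hj : ∃ i, g i = j
    · simpa [hs', dif_pos hj] using hs hj.choose
    · simp [hs', dif_neg hj]

lemma aux_reidx (n : ℕ) (F : ℕ → ℝ) :
    ∑ j ∈ Finset.Icc 1 n, F j = ∑ j : Fin n, F (j.1 + 1) := by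
  have : Finset.Icc 1 n = Finset.Ico 1 (n + 1) := by
    rw [Finset.Ico_add_one_right_eq_Icc]
  rw [this, Finset.sum_Ico_eq_sum_range]
  simp only [Nat.add_sub_cancel]
  rw [Finset.sum_range fun i => F (1 + i)]
  exact Finset.sum_congr rfl fun i _ => by rw [add_comm]

lemma aux_P1 (n : ℕ) (x y : ℕ → ℝ) :
    ∑ i ∈ Finset.Icc 1 n, psum x i * psum y i
      = ∑ j ∈ Finset.Icc 1 n, ∑ k ∈ Finset.Icc 1 n,
          ((n : ℝ) + 1 - max (j : ℝ) (k : ℝ)) * (x j * y k) := by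
  have hps : ∀ f : ℕ → ℝ, ∀ i ∈ Finset.Icc 1 n,
      psum f i = ∑ j ∈ Finset.Icc 1 n, if j ≤ i then f j else 0 := by
    intro f i hi
    rw [Finset.sum_ite, Finset.sum_const_zero, add_zero]
    have : Finset.filter (fun j => j ≤ i) (Finset.Icc 1 n) = Finset.Icc 1 i := by
      ext a
      simp only [Finset.mem_filter, Finset.mem_Icc] at *
      omega
    rw [this, psum]
  calc ∑ i ∈ Finset.Icc 1 n, psum x i * psum y i
      = ∑ i ∈ Finset.Icc 1 n, ∑ j ∈ Finset.Icc 1 n, ∑ k ∈ Finset.Icc 1 n,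
          (if j ≤ i then x j else 0) * (if k ≤ i then y k else 0) := by
        refine Finset.sum_congr rfl fun i hi => ?_
        rw [hps x i hi, hps y i hi, Finset.sum_mul_sum]
    _ = ∑ j ∈ Finset.Icc 1 n, ∑ k ∈ Finset.Icc 1 n, ∑ i ∈ Finset.Icc 1 n,
          (if j ≤ i then x j else 0) * (if k ≤ i then y k else 0) := by
        rw [Finset.sum_comm]
        exact Finset.sum_congr rfl fun j _ => Finset.sum_comm
    _ = _ := by
        refine Finset.sum_congr rfl fun j hj => Finset.sum_congr rfl fun k hk => ?_
        have h1j : 1 ≤ j ∧ j ≤ n := by simpa [Finset.mem_Icc] using hj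
        have h1k : 1 ≤ k ∧ k ≤ n := by simpa [Finset.mem_Icc] using hk
        have step : ∀ i ∈ Finset.Icc 1 n,
            (if j ≤ i then x j else 0) * (if k ≤ i then y k else 0)
              = if max j k ≤ i then x j * y k else 0 := by
          intro i _
          by_cases h1 : j ≤ i <;> by_cases h2 : k ≤ i <;>
            simp [h1, h2, max_le_iff]
        rw [Finset.sum_congr rfl step, ← Finset.sum_filter]
        have hfil : Finset.filter (fun i => max j k ≤ i) (Finset.Icc 1 n)
            = Finset.Icc (max j k) n := by
          ext a
          simp only [Finset.mem_filter, Finset.mem_Icc]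
          omega
        rw [hfil, Finset.sum_const, Nat.card_Icc, nsmul_eq_mul]
        congr 1
        have hmax : max j k ≤ n + 1 := by omega
        rw [Nat.cast_sub hmax]
        push_cast [Nat.cast_max]
        ring

lemma aux_P2 (n : ℕ) (x : ℕ → ℝ) :
    ∑ i ∈ Finset.Icc 1 n, psum x i
      = ∑ j ∈ Finset.Icc 1 n, ((n : ℝ) + 1 - (j : ℝ)) * x j := by
  have hps : ∀ i ∈ Finset.Icc 1 n,
      psum x i = ∑ j ∈ Finset.Icc 1 n, if j ≤ i then x j else 0 := by
    intro i hi
    rw [Finset.sum_ite, Finset.sum_const_zero, add_zero]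
    have : Finset.filter (fun j => j ≤ i) (Finset.Icc 1 n) = Finset.Icc 1 i := by
      ext a
      simp only [Finset.mem_filter, Finset.mem_Icc] at *
      omega
    rw [this, psum]
  rw [Finset.sum_congr rfl hps, Finset.sum_comm]
  refine Finset.sum_congr rfl fun j hj => ?_
  have h1j : 1 ≤ j ∧ j ≤ n := by simpa [Finset.mem_Icc] using hj
  rw [← Finset.sum_filter]
  have hfil : Finset.filter (fun i => j ≤ i) (Finset.Icc 1 n) = Finset.Icc j n := by
    ext a
    simp only [Finset.mem_filter, Finset.mem_Icc]
    omega
  rw [hfil, Finset.sum_const, Nat.card_Icc, nsmul_eq_mul]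
  congr 1
  rw [Nat.cast_sub (by omega)]
  push_cast
  ring

lemma aux_Zbil (n : ℕ) (hn : 1 ≤ n) (x y : ℕ → ℝ) :
    Zbil n x y / n
      = ∑ j : Fin n, ∑ k : Fin n,
          Mker ((j.1 : ℝ) / n) ((k.1 : ℝ) / n)
            * (x (j.1 + 1) * (Real.sqrt n)⁻¹) * (y (k.1 + 1) * (Real.sqrt n)⁻¹) := by
  have hn0 : (n : ℝ) ≠ 0 := by positivity
  have hcc : (Real.sqrt n)⁻¹ * (Real.sqrt n)⁻¹ = ((n : ℝ))⁻¹ := by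
    rw [← mul_inv, Real.mul_self_sqrt (by positivity)]
  rw [Zbil, aux_P1, aux_P2 n x, aux_P2 n y]
  rw [aux_reidx n (fun j : ℕ => ∑ k ∈ Finset.Icc 1 n,
        ((n : ℝ) + 1 - max (j : ℝ) (k : ℝ)) * (x j * y k)),
      aux_reidx n (fun j : ℕ => ((n : ℝ) + 1 - (j : ℝ)) * x j),
      aux_reidx n (fun k : ℕ => ((n : ℝ) + 1 - (k : ℝ)) * y k)]
  have inner : ∀ j : Fin n,
      ∑ k ∈ Finset.Icc 1 n,
          ((n : ℝ) + 1 - max (((j.1 + 1 : ℕ)) : ℝ) (k : ℝ)) * (x (j.1 + 1) * y k)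
        = ∑ k : Fin n, ((n : ℝ) + 1 - max ((j.1 : ℝ) + 1) ((k.1 : ℝ) + 1))
            * (x (j.1 + 1) * y (k.1 + 1)) := by
    intro j
    rw [aux_reidx n (fun k : ℕ =>
      ((n : ℝ) + 1 - max (((j.1 + 1 : ℕ)) : ℝ) (k : ℝ)) * (x (j.1 + 1) * y k))]
    exact Finset.sum_congr rfl fun k _ => by push_cast; ring_nf
  simp only [inner]
  rw [mul_assoc (1 / (n : ℝ) ^ 2), Finset.sum_mul_sum, sub_div]
  simp only [Finset.mul_sum, Finset.sum_div]
  rw [← Finset.sum_sub_distrib]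
  refine Finset.sum_congr rfl fun j _ => ?_
  rw [← Finset.sum_sub_distrib]
  refine Finset.sum_congr rfl fun k _ => ?_
  have hc : ∀ A B M : ℝ, M * (A * (Real.sqrt n)⁻¹) * (B * (Real.sqrt n)⁻¹)
      = M * ((n : ℝ))⁻¹ * (A * B) := by
    intro A B M
    rw [← hcc]; ring
  rw [hc, Mker, min_div_div_right (by positivity : (0:ℝ) ≤ (n:ℝ))]
  rw [max_add_add_right ((j.1 : ℝ)) ((k.1 : ℝ)) 1]
  rcases le_total (j.1 : ℝ) (k.1 : ℝ) with h | h
  · rw [max_eq_right h, min_eq_left h]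
    field_simp
    push_cast
    ring
  · rw [max_eq_left h, min_eq_right h]
    field_simp
    push_cast
    ring

lemma aux_quadForm {Ω : Type*} (W V : Ω → ℝ → ℝ) (n : ℕ) (ω : Ω) :
    quadForm W V n ω
      = ∑ j : Fin n, ∑ k : Fin n,
          Mker ((j.1 : ℝ) / n) ((k.1 : ℝ) / n)
            * (W ω (((j.1 + 1 : ℕ) : ℝ) / n) - W ω (((j.1 : ℕ) : ℝ) / n))
            * (V ω (((k.1 + 1 : ℕ) : ℝ) / n) - V ω (((k.1 : ℕ) : ℝ) / n)) := by
  rw [quadForm, aux_reidx n]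
  refine Finset.sum_congr rfl fun j _ => ?_
  rw [aux_reidx n]
  refine Finset.sum_congr rfl fun k _ => ?_
  have e1 : (((j.1 + 1 : ℕ) : ℝ) - 1) = (j.1 : ℝ) := by push_cast; ring
  have e2 : (((k.1 + 1 : ℕ) : ℝ) - 1) = (k.1 : ℝ) := by push_cast; ring
  rw [e1, e2]

variable {Ω Ω' : Type*} [MeasurableSpace Ω] [MeasurableSpace Ω']

/-- `(Z11^n/n, Z12^n/n, Z22^n/n)` has the same joint law as `(B_n, A_n, C_n)`, and
consequently `θ_n` has the same law as `A_n/√(B_n C_n)`. -/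
theorem triple_eq_in_distribution (μ' : Measure Ω') [IsProbabilityMeasure μ'] (X Y : ℕ → Ω' → ℝ)
    (hXm : ∀ i, Measurable (X i)) (hYm : ∀ i, Measurable (Y i))
    (hXYindep : iIndepFun (Sum.elim X Y) μ')
    (hX : ∀ i, Measure.map (X i) μ' = gaussianReal 0 1)
    (hY : ∀ i, Measure.map (Y i) μ' = gaussianReal 0 1)
    (μ : Measure Ω) [IsProbabilityMeasure μ]
    (W1 W2 : Ω → ℝ → ℝ) (hW1 : IsBrownian μ W1) (hW2 : IsBrownian μ W2)
    (hWindep : IndepFun W1 W2 μ)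
    (n : ℕ) (hn : 2 ≤ n) :
    Measure.map (fun ω =>
        ((Zbil n (fun i => X i ω) (fun i => X i ω) / n,
          Zbil n (fun i => X i ω) (fun i => Y i ω) / n,
          Zbil n (fun i => Y i ω) (fun i => Y i ω) / n) : ℝ × ℝ × ℝ)) μ'
      = Measure.map (fun ω =>
          ((quadForm W1 W1 n ω, quadForm W1 W2 n ω, quadForm W2 W2 n ω) : ℝ × ℝ × ℝ)) μ
    ∧ Measure.map (thetaN X Y n) μ'
        = Measure.map (fun ω => quadForm W1 W2 n ω /
            Real.sqrt (quadForm W1 W1 n ω * quadForm W2 W2 n ω)) μ := by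
  classical
  have hn1 : 1 ≤ n := by omega
  have hnne : (n : ℝ) ≠ 0 := Nat.cast_ne_zero.mpr (by omega)
  have hnpos : (0 : ℝ) < n := by
    have : 0 < n := by omega
    exact_mod_cast this
  set c : ℝ := (Real.sqrt n)⁻¹ with hcdef
  set t : ℕ → ℝ := fun m => (m : ℝ) / n with htdef
  set v : NNReal := Real.toNNReal ((n : ℝ)⁻¹) with hvdef
  set ν : Measure (Fin n → ℝ) := Measure.pi (fun _ : Fin n => gaussianReal 0 v) with hνdef
  set UX : Ω' → Fin n → ℝ := fun ω i => X (i.1 + 1) ω * c with hUXdef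
  set UY : Ω' → Fin n → ℝ := fun ω i => Y (i.1 + 1) ω * c with hUYdef
  set D1 : Ω → Fin n → ℝ := fun ω i => W1 ω (t (i.1 + 1)) - W1 ω (t i.1) with hD1def
  set D2 : Ω → Fin n → ℝ := fun ω i => W2 ω (t (i.1 + 1)) - W2 ω (t i.1) with hD2def
  have hUXm : Measurable UX := measurable_pi_lambda _ fun i => (hXm _).mul_const c
  have hUYm : Measurable UY := measurable_pi_lambda _ fun i => (hYm _).mul_const c
  have hD1m : Measurable D1 := measurable_pi_lambda _ fun i => (hW1.meas _).sub (hW1.meas _)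
  have hD2m : Measurable D2 := measurable_pi_lambda _ fun i => (hW2.meas _).sub (hW2.meas _)
  have htmono : Monotone t := by
    intro a b hab
    have hab' : (a : ℝ) ≤ b := by exact_mod_cast hab
    exact div_le_div_of_nonneg_right hab' hnpos.le
  have htnn : ∀ m, 0 ≤ t m := fun m => by
    simp only [htdef]
    positivity
  have hvar : ∀ i : Fin n, Real.toNNReal (t (i.1 + 1) - t i.1) = v := by
    intro i
    rw [hvdef]
    congr 1
    simp only [htdef]
    have h1 : ((i.1 + 1 : ℕ) : ℝ) - (i.1 : ℝ) = 1 := by push_cast; ring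
    rw [div_sub_div_same, h1, one_div]
  have hDlaw : ∀ (W : Ω → ℝ → ℝ), IsBrownian μ W →
      Measure.map (fun ω (i : Fin n) => W ω (t (i.1 + 1)) - W ω (t i.1)) μ = ν := by
    intro W hW
    exact (aux_map_eq_pi (fun i : Fin n => fun ω => W ω (t (i.1 + 1)) - W ω (t i.1))
      (fun i => (hW.meas _).sub (hW.meas _)) (hW.indep_incr n t htmono htnn) id
      Function.injective_id).trans
      (congrArg Measure.pi (funext fun i =>
        (hW.gauss_incr (t i.1) (t (i.1 + 1)) (htnn _) (htmono (Nat.le_succ _))).trans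
          (congrArg (gaussianReal 0) (hvar i))))
  have hgauss_scaled : ∀ (Z : ℕ → Ω' → ℝ), (∀ i, Measurable (Z i)) →
      (∀ i, Measure.map (Z i) μ' = gaussianReal 0 1) →
      ∀ m : ℕ, Measure.map (fun ω => Z m ω * c) μ' = gaussianReal 0 v := by
    intro Z hZm hZ m
    have h1 : (fun ω => Z m ω * c) = (· * c) ∘ Z m := rfl
    rw [h1, ← Measure.map_map (measurable_mul_const c) (hZm m), hZ m,
      gaussianReal_map_mul_const c, mul_zero, mul_one]
    congr 1
    refine NNReal.coe_injective ?_
    rw [hvdef, Real.coe_toNNReal _ (by positivity)]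
    show c ^ 2 = (n : ℝ)⁻¹
    rw [hcdef, inv_pow, sq, Real.mul_self_sqrt (le_of_lt hnpos)]
  have hXYm : ∀ s : ℕ ⊕ ℕ, Measurable (Sum.elim X Y s) := fun s => by
    cases s with
    | inl m => exact hXm m
    | inr m => exact hYm m
  have hUXlaw : Measure.map UX μ' = ν := by
    refine Eq.trans ?_ (congrArg Measure.pi (funext fun i : Fin n =>
      hgauss_scaled X hXm hX (i.1 + 1)))
    exact aux_map_eq_pi (fun s : ℕ ⊕ ℕ => fun ω => Sum.elim X Y s ω * c)
      (fun s => (hXYm s).mul_const c)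
      (hXYindep.comp (fun _ r => r * c) (fun _ => measurable_mul_const c))
      (fun i : Fin n => Sum.inl (i.1 + 1))
      (fun a b hab => Fin.ext (by have := Sum.inl.inj hab; omega))
  have hUYlaw : Measure.map UY μ' = ν := by
    refine Eq.trans ?_ (congrArg Measure.pi (funext fun i : Fin n =>
      hgauss_scaled Y hYm hY (i.1 + 1)))
    exact aux_map_eq_pi (fun s : ℕ ⊕ ℕ => fun ω => Sum.elim X Y s ω * c)
      (fun s => (hXYm s).mul_const c)
      (hXYindep.comp (fun _ r => r * c) (fun _ => measurable_mul_const c))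
      (fun i : Fin n => Sum.inr (i.1 + 1))
      (fun a b hab => Fin.ext (by have := Sum.inr.inj hab; omega))
  have hD1law : Measure.map D1 μ = ν := hDlaw W1 hW1
  have hD2law : Measure.map D2 μ = ν := hDlaw W2 hW2
  -- independence of the two coordinate blocks
  have hUindep : IndepFun UX UY μ' := by
    have hST : Disjoint
        (Finset.image (fun i : Fin n => (Sum.inl (i.1 + 1) : ℕ ⊕ ℕ)) Finset.univ)
        (Finset.image (fun i : Fin n => (Sum.inr (i.1 + 1) : ℕ ⊕ ℕ)) Finset.univ) := by
      rw [Finset.disjoint_left]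
      rintro a ha hb
      simp only [Finset.mem_image, Finset.mem_univ, true_and] at ha hb
      obtain ⟨i, hi⟩ := ha
      obtain ⟨j, hj⟩ := hb
      rw [← hi] at hj
      cases hj
    have base := hXYindep.indepFun_finset _ _ hST hXYm
    have hrS : Measurable (fun (u : (Finset.image (fun i : Fin n =>
        (Sum.inl (i.1 + 1) : ℕ ⊕ ℕ)) Finset.univ : Finset (ℕ ⊕ ℕ)) → ℝ) (i : Fin n) =>
        u ⟨Sum.inl (i.1 + 1), Finset.mem_image_of_mem _ (Finset.mem_univ i)⟩ * c) :=
      measurable_pi_lambda _ fun i => by fun_prop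
    have hrT : Measurable (fun (u : (Finset.image (fun i : Fin n =>
        (Sum.inr (i.1 + 1) : ℕ ⊕ ℕ)) Finset.univ : Finset (ℕ ⊕ ℕ)) → ℝ) (i : Fin n) =>
        u ⟨Sum.inr (i.1 + 1), Finset.mem_image_of_mem _ (Finset.mem_univ i)⟩ * c) :=
      measurable_pi_lambda _ fun i => by fun_prop
    exact base.comp hrS hrT
  have hDindep : IndepFun D1 D2 μ := by
    have hφ : Measurable (fun (w : ℝ → ℝ) (i : Fin n) => w (t (i.1 + 1)) - w (t i.1)) :=
      measurable_pi_lambda _ fun i => (measurable_pi_apply _).sub (measurable_pi_apply _)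
    exact hWindep.comp hφ hφ
  have hpairX : Measure.map (fun ω => (UX ω, UY ω)) μ' = ν.prod ν := by
    rw [(indepFun_iff_map_prod_eq_prod_map_map hUXm.aemeasurable hUYm.aemeasurable).mp
      hUindep, hUXlaw, hUYlaw]
  have hpairD : Measure.map (fun ω => (D1 ω, D2 ω)) μ = ν.prod ν := by
    rw [(indepFun_iff_map_prod_eq_prod_map_map hD1m.aemeasurable hD2m.aemeasurable).mp
      hDindep, hD1law, hD2law]
  -- the bilinear functional
  set Q : (Fin n → ℝ) → (Fin n → ℝ) → ℝ := fun a b => ∑ j : Fin n, ∑ k : Fin n,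
      Mker ((j.1 : ℝ) / n) ((k.1 : ℝ) / n) * a j * b k with hQdef
  set G : (Fin n → ℝ) × (Fin n → ℝ) → ℝ × ℝ × ℝ :=
    fun p => (Q p.1 p.1, Q p.1 p.2, Q p.2 p.2) with hGdef
  have hQm : ∀ (c1 c2 : ((Fin n → ℝ) × (Fin n → ℝ)) → (Fin n → ℝ)),
      Measurable c1 → Measurable c2 → Measurable (fun p => Q (c1 p) (c2 p)) := by
    intro c1 c2 h1 h2
    simp only [hQdef]
    refine Finset.measurable_sum _ fun j _ => ?_
    refine Finset.measurable_sum _ fun k _ => ?_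
    exact (measurable_const.mul ((measurable_pi_apply j).comp h1)).mul
      ((measurable_pi_apply k).comp h2)
  have hGm : Measurable G :=
    (hQm _ _ measurable_fst measurable_fst).prodMk
      ((hQm _ _ measurable_fst measurable_snd).prodMk
        (hQm _ _ measurable_snd measurable_snd))
  -- pointwise identifications
  have e1 : (fun ω =>
      ((Zbil n (fun i => X i ω) (fun i => X i ω) / n,
        Zbil n (fun i => X i ω) (fun i => Y i ω) / n,
        Zbil n (fun i => Y i ω) (fun i => Y i ω) / n) : ℝ × ℝ × ℝ))
      = G ∘ (fun ω => (UX ω, UY ω)) := by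
    funext ω
    simp only [Function.comp_apply, hGdef, Prod.mk.injEq]
    exact ⟨aux_Zbil n hn1 _ _, aux_Zbil n hn1 _ _, aux_Zbil n hn1 _ _⟩
  have e2 : (fun ω =>
      ((quadForm W1 W1 n ω, quadForm W1 W2 n ω, quadForm W2 W2 n ω) : ℝ × ℝ × ℝ))
      = G ∘ (fun ω => (D1 ω, D2 ω)) := by
    funext ω
    simp only [Function.comp_apply, hGdef, Prod.mk.injEq]
    exact ⟨aux_quadForm W1 W1 n ω, aux_quadForm W1 W2 n ω, aux_quadForm W2 W2 n ω⟩
  have key : Measure.map (fun ω =>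
      ((Zbil n (fun i => X i ω) (fun i => X i ω) / n,
        Zbil n (fun i => X i ω) (fun i => Y i ω) / n,
        Zbil n (fun i => Y i ω) (fun i => Y i ω) / n) : ℝ × ℝ × ℝ)) μ'
      = Measure.map (fun ω =>
          ((quadForm W1 W1 n ω, quadForm W1 W2 n ω, quadForm W2 W2 n ω) : ℝ × ℝ × ℝ)) μ := by
    rw [e1, e2, ← Measure.map_map hGm (hUXm.prodMk hUYm),
      ← Measure.map_map hGm (hD1m.prodMk hD2m), hpairX, hpairD]
  refine ⟨key, ?_⟩
  -- the ratio statistic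
  set f : ℝ × ℝ × ℝ → ℝ := fun p => p.2.1 / Real.sqrt (p.1 * p.2.2) with hfdef
  have hfm : Measurable f :=
    (measurable_fst.comp measurable_snd).div
      (Real.continuous_sqrt.measurable.comp
        (measurable_fst.mul (measurable_snd.comp measurable_snd)))
  have hsqrt : ∀ a b d : ℝ,
      (b / (n : ℝ)) / Real.sqrt ((a / n) * (d / n)) = b / Real.sqrt (a * d) := by
    intro a b d
    have h1 : (a / (n : ℝ)) * (d / n) = (a * d) * ((n : ℝ)⁻¹) ^ 2 := by ring
    rw [h1, Real.sqrt_mul' _ (sq_nonneg _),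
      Real.sqrt_sq (by positivity : (0:ℝ) ≤ (n : ℝ)⁻¹),
      div_eq_mul_inv b (n : ℝ), mul_div_mul_right _ _ (inv_ne_zero hnne)]
  have eθ : thetaN X Y n = f ∘ (fun ω =>
      ((Zbil n (fun i => X i ω) (fun i => X i ω) / n,
        Zbil n (fun i => X i ω) (fun i => Y i ω) / n,
        Zbil n (fun i => Y i ω) (fun i => Y i ω) / n) : ℝ × ℝ × ℝ)) := by
    funext ω
    show thetaN X Y n ω
      = (Zbil n (fun i => X i ω) (fun i => Y i ω) / n) /
          Real.sqrt ((Zbil n (fun i => X i ω) (fun i => X i ω) / n)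
            * (Zbil n (fun i => Y i ω) (fun i => Y i ω) / n))
    rw [hsqrt]
    rfl
  have eθW : (fun ω => quadForm W1 W2 n ω /
      Real.sqrt (quadForm W1 W1 n ω * quadForm W2 W2 n ω))
      = f ∘ (fun ω =>
        ((quadForm W1 W1 n ω, quadForm W1 W2 n ω, quadForm W2 W2 n ω) : ℝ × ℝ × ℝ)) := rfl
  have htm' : Measurable (fun ω =>
      ((Zbil n (fun i => X i ω) (fun i => X i ω) / n,
        Zbil n (fun i => X i ω) (fun i => Y i ω) / n,
        Zbil n (fun i => Y i ω) (fun i => Y i ω) / n) : ℝ × ℝ × ℝ)) := by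
    rw [e1]; exact hGm.comp (hUXm.prodMk hUYm)
  have htmW : Measurable (fun ω =>
      ((quadForm W1 W1 n ω, quadForm W1 W2 n ω, quadForm W2 W2 n ω) : ℝ × ℝ × ℝ)) := by
    rw [e2]; exact hGm.comp (hD1m.prodMk hD2m)
  rw [eθ, eθW, ← Measure.map_map hfm htm', ← Measure.map_map hfm htmW, key]


end
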